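/- arXiv:2604.05944 — 6 statements merged into one kernel-verified Lean document; each statement's English description precedes it below -/
import Mathlib

section
/- Let n > 2 and let B be an n×2 real matrix with BᵀB = I₂ whose first row equals (b, 0) with 0 < b² ≤ 1/n. Set t = 1/√(1 − b²) and let Ĉ be the (n−1)×2 matrix whose rows are (t·B_{i1}, B_{i2}) for i = 2,…,n. Then ĈᵀĈ = I₂, and for any two distinct indices i, j ∈ {2,…,n}, if the 2×2 submatrix of Ĉ with rows (t·B_{i1}, B_{i2}) and (t·B_{j1}, B_{j2}) has squared smallest singular value at least 1/(n−1), then the 2×2 submatrix of B with rows (B_{i1}, B_{i2}) and (B_{j1}, B_{j2}) has squared smallest singular value at least 1/n. -/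
open Matrix

/-- The smallest singular value of a `2 × 2` real matrix `Q`: the square root of the
smallest eigenvalue of `Q * Qᵀ` (for a `2 × 2` real positive semidefinite matrix `S`, the
smallest eigenvalue equals `(trace S - √((trace S)² - 4 det S)) / 2`). -/
noncomputable def sigma2 (Q : Matrix (Fin 2) (Fin 2) ℝ) : ℝ :=
  Real.sqrt ((Matrix.trace (Q * Qᵀ) -
    Real.sqrt ((Matrix.trace (Q * Qᵀ)) ^ 2 - 4 * (Q * Qᵀ).det)) / 2)

lemma transpose_fin_two' (w x y z : ℝ) : (!![w, x; y, z])ᵀ = !![w, y; x, z] := by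
  ext k l
  fin_cases k <;> fin_cases l <;> simp

lemma trace_mul_transpose (w x y z : ℝ) :
    Matrix.trace (!![w, x; y, z] * !![w, x; y, z]ᵀ) = w^2 + x^2 + y^2 + z^2 := by
  rw [transpose_fin_two', Matrix.mul_fin_two, Matrix.trace_fin_two_of]
  ring

lemma det_mul_transpose (w x y z : ℝ) :
    (!![w, x; y, z] * !![w, x; y, z]ᵀ).det = (w*z - x*y)^2 := by
  rw [Matrix.det_mul, Matrix.det_transpose, Matrix.det_fin_two_of]
  ring

lemma fwd (T D c : ℝ) (hc : 0 < c)
    (h : c ≤ Real.sqrt ((T - Real.sqrt (T^2 - 4*D))/2) ^ 2) :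
    2*c ≤ T ∧ c*T - c^2 ≤ D := by
  have hX : c ≤ (T - Real.sqrt (T^2 - 4*D))/2 := by
    rcases le_or_gt ((T - Real.sqrt (T^2 - 4*D))/2) 0 with h0 | h0
    · rw [Real.sqrt_eq_zero'.mpr h0] at h
      norm_num at h
      linarith
    · rwa [Real.sq_sqrt h0.le] at h
  have hs0 : 0 ≤ Real.sqrt (T^2 - 4*D) := Real.sqrt_nonneg _
  have hT : 2*c ≤ T := by linarith
  have hY : T^2 - 4*D ≤ (T - 2*c)^2 := by
    rcases le_or_gt (T^2 - 4*D) 0 with h0 | h0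
    · nlinarith
    · have h2 : Real.sqrt (T^2-4*D) ^ 2 ≤ (T - 2*c)^2 :=
        pow_le_pow_left₀ hs0 (by linarith) 2
      rwa [Real.sq_sqrt h0.le] at h2
  exact ⟨hT, by nlinarith⟩

lemma bwd (T D c : ℝ) (hc : 0 ≤ c) (h1 : 2*c ≤ T) (h2 : c*T - c^2 ≤ D) :
    c ≤ Real.sqrt ((T - Real.sqrt (T^2 - 4*D))/2) ^ 2 := by
  have hY : T^2 - 4*D ≤ (T - 2*c)^2 := by nlinarith
  have hs : Real.sqrt (T^2 - 4*D) ≤ T - 2*c := by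
    calc Real.sqrt (T^2 - 4*D) ≤ Real.sqrt ((T - 2*c)^2) := Real.sqrt_le_sqrt hY
    _ = T - 2*c := Real.sqrt_sq (by linarith)
  rw [Real.sq_sqrt (by linarith : (0:ℝ) ≤ (T - Real.sqrt (T^2 - 4*D))/2)]
  linarith

lemma key (u τ a b2 d e c c' : ℝ) (hu0 : 0 < u) (hu1 : u ≤ 1)
    (hτ : τ * u = 1) (hc : 0 < c) (hcc : c ≤ c' * u)
    (ha : 0 ≤ a) (hb2 : 0 ≤ b2) (hd : 0 ≤ d) (hde : d = a * b2 - e^2)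
    (H2 : 2 * c' ≤ τ * a + b2) (H1 : c' * (τ * a + b2) - c'^2 ≤ τ * d) :
    2 * c ≤ a + b2 ∧ c * (a + b2) - c^2 ≤ d := by
  have hτ0 : 0 < τ := by nlinarith
  have hτ1 : 1 ≤ τ := by nlinarith
  have hc' : 0 < c' := by nlinarith
  -- step 1 : c' ≤ τ * a
  have hxy : 0 ≤ (τ*a - c') * (b2 - c') := by nlinarith [sq_nonneg e]
  have step1 : c' ≤ τ * a := by
    by_contra hlt
    push_neg at hlt
    nlinarith
  -- step 2 : τ² d ≥ c' τ (a+b2) - c'²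
  have step2 : c' * τ * (a + b2) - c'^2 ≤ τ^2 * d := by
    nlinarith [mul_nonneg (mul_nonneg (sub_nonneg.2 hτ1) hc'.le) (sub_nonneg.2 step1),
      mul_le_mul_of_nonneg_left H1 hτ0.le]
  -- step 2' : d ≥ (c' u)(a+b2) - (c' u)²
  have e1 : u * u * (τ^2 * d) = d := by
    calc u * u * (τ^2 * d) = (τ * u)^2 * d := by ring
    _ = d := by rw [hτ]; ring
  have e2 : u * u * (c' * τ * (a + b2)) = c' * u * (a + b2) := by
    calc u * u * (c' * τ * (a + b2)) = (τ * u) * (u * c' * (a + b2)) := by ring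
    _ = c' * u * (a + b2) := by rw [hτ]; ring
  have step2' : (c'*u) * (a + b2) - (c'*u)^2 ≤ d := by
    have h := mul_le_mul_of_nonneg_left step2 (mul_nonneg hu0.le hu0.le)
    nlinarith [h, e1, e2]
  -- step 3 : trace
  have step3 : 2 * (c'*u) ≤ a + b2 := by
    have h := mul_le_mul_of_nonneg_left H2 hu0.le
    nlinarith [h, hτ]
  refine ⟨by nlinarith, ?_⟩
  nlinarith [sq_nonneg (c'*u - c),
    mul_nonneg (sub_nonneg.2 hcc) (by linarith : (0:ℝ) ≤ a + b2 - (c'*u) - c)]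

set_option maxHeartbeats 1000000 in
theorem stmt_2 (n : ℕ) (hn : 2 < n) (b : ℝ) (B : Matrix (Fin n) (Fin 2) ℝ)
    (hB : Bᵀ * B = 1)
    (hrow0 : B ⟨0, by omega⟩ 0 = b) (hrow1 : B ⟨0, by omega⟩ 1 = 0)
    (hb : 0 < b ^ 2) (hb' : b ^ 2 ≤ 1 / (n : ℝ))
    (t : ℝ) (ht : t = 1 / Real.sqrt (1 - b ^ 2))
    (Chat : Matrix {i : Fin n // i.1 ≠ 0} (Fin 2) ℝ)
    (hChat : ∀ i : {i : Fin n // i.1 ≠ 0},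
      Chat i 0 = t * B i.1 0 ∧ Chat i 1 = B i.1 1) :
    Chatᵀ * Chat = 1 ∧
    ∀ i j : Fin n, i.1 ≠ 0 → j.1 ≠ 0 → i ≠ j →
      1 / ((n : ℝ) - 1) ≤ (sigma2 !![t * B i 0, B i 1; t * B j 0, B j 1]) ^ 2 →
      1 / (n : ℝ) ≤ (sigma2 !![B i 0, B i 1; B j 0, B j 1]) ^ 2 := by
  have hn3 : (3:ℝ) ≤ (n:ℝ) := by exact_mod_cast hn
  have hnpos : (0:ℝ) < (n:ℝ) := by linarith
  have h1n : (1:ℝ)/(n:ℝ) * (n:ℝ) = 1 := by field_simp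
  have hbn : b^2 ≤ 1/3 := by nlinarith [h1n, hb', (by positivity : (0:ℝ) < 1/(n:ℝ))]
  have hu0 : (0:ℝ) < 1 - b^2 := by linarith
  have ht2 : t^2 * (1 - b^2) = 1 := by
    rw [ht, div_pow, one_pow, Real.sq_sqrt hu0.le]
    field_simp
  have hc'0 : (0:ℝ) < 1/((n:ℝ)-1) := by
    apply one_div_pos.mpr; linarith
  have hcc : (1:ℝ)/(n:ℝ) ≤ 1/((n:ℝ)-1) * (1 - b^2) := by
    rw [div_mul_eq_mul_div, le_div_iff₀ (by linarith : (0:ℝ) < (n:ℝ)-1)]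
    nlinarith [h1n, hb', one_div_pos.mpr hnpos]
  set z : Fin n := ⟨0, by omega⟩ with hz
  have hsum : ∀ f : Fin n → ℝ, ∑ i : {i : Fin n // i.1 ≠ 0}, f i.1
      = (∑ i : Fin n, f i) - f z := by
    intro f
    rw [← Finset.sum_erase_eq_sub (Finset.mem_univ z)]
    exact (Finset.sum_subtype _ (fun x => by
      simp [Finset.mem_erase, Fin.ext_iff, hz]) f).symm
  have hBe : ∀ k l : Fin 2, (∑ i : Fin n, B i k * B i l)
      = (1 : Matrix (Fin 2) (Fin 2) ℝ) k l := by
    intro k l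
    have h := congrFun (congrFun hB k) l
    rw [Matrix.mul_apply] at h
    simpa [Matrix.transpose_apply] using h
  have h00 := hBe 0 0
  have h01 := hBe 0 1
  have h11 := hBe 1 1
  rw [Matrix.one_apply_eq] at h00 h11
  rw [Matrix.one_apply_ne (by decide : (0 : Fin 2) ≠ 1)] at h01
  constructor
  · ext k l
    rw [Matrix.mul_apply]
    simp only [Matrix.transpose_apply]
    fin_cases k <;> fin_cases l
    · show ∑ x : {i : Fin n // i.1 ≠ 0}, Chat x 0 * Chat x 0 = (1 : Matrix (Fin 2) (Fin 2) ℝ) 0 0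
      have e : ∀ i : {i : Fin n // i.1 ≠ 0}, Chat i 0 * Chat i 0
          = (fun x : Fin n => t * B x 0 * (t * B x 0)) i.1 :=
        fun i => by rw [(hChat i).1]
      rw [Finset.sum_congr rfl (fun i _ => e i),
        hsum (fun x : Fin n => t * B x 0 * (t * B x 0))]
      have e2 : ∑ x : Fin n, t * B x 0 * (t * B x 0) = t^2 * ∑ x : Fin n, B x 0 * B x 0 := by
        rw [Finset.mul_sum]; exact Finset.sum_congr rfl (fun i _ => by ring)
      rw [e2, h00, Matrix.one_apply_eq]
      simp only [hrow0]
      nlinarith [ht2]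
    · show ∑ x : {i : Fin n // i.1 ≠ 0}, Chat x 0 * Chat x 1 = (1 : Matrix (Fin 2) (Fin 2) ℝ) 0 1
      have e : ∀ i : {i : Fin n // i.1 ≠ 0}, Chat i 0 * Chat i 1
          = (fun x : Fin n => t * B x 0 * B x 1) i.1 :=
        fun i => by rw [(hChat i).1, (hChat i).2]
      rw [Finset.sum_congr rfl (fun i _ => e i),
        hsum (fun x : Fin n => t * B x 0 * B x 1)]
      have e2 : ∑ x : Fin n, t * B x 0 * B x 1 = t * ∑ x : Fin n, B x 0 * B x 1 := by
        rw [Finset.mul_sum]; exact Finset.sum_congr rfl (fun i _ => by ring)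
      rw [e2, h01, Matrix.one_apply_ne (by decide : (0 : Fin 2) ≠ 1)]
      simp only [hrow1]
      ring
    · show ∑ x : {i : Fin n // i.1 ≠ 0}, Chat x 1 * Chat x 0 = (1 : Matrix (Fin 2) (Fin 2) ℝ) 1 0
      have e : ∀ i : {i : Fin n // i.1 ≠ 0}, Chat i 1 * Chat i 0
          = (fun x : Fin n => B x 1 * (t * B x 0)) i.1 :=
        fun i => by rw [(hChat i).1, (hChat i).2]
      rw [Finset.sum_congr rfl (fun i _ => e i),
        hsum (fun x : Fin n => B x 1 * (t * B x 0))]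
      have e2 : ∑ x : Fin n, B x 1 * (t * B x 0) = t * ∑ x : Fin n, B x 0 * B x 1 := by
        rw [Finset.mul_sum]; exact Finset.sum_congr rfl (fun i _ => by ring)
      rw [e2, h01, Matrix.one_apply_ne (by decide : (1 : Fin 2) ≠ 0)]
      simp only [hrow1]
      ring
    · show ∑ x : {i : Fin n // i.1 ≠ 0}, Chat x 1 * Chat x 1 = (1 : Matrix (Fin 2) (Fin 2) ℝ) 1 1
      have e : ∀ i : {i : Fin n // i.1 ≠ 0}, Chat i 1 * Chat i 1
          = (fun x : Fin n => B x 1 * B x 1) i.1 :=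
        fun i => by rw [(hChat i).2]
      rw [Finset.sum_congr rfl (fun i _ => e i),
        hsum (fun x : Fin n => B x 1 * B x 1)]
      rw [h11, Matrix.one_apply_eq]
      simp only [hrow1]
      ring
  · intro i j hi hj hij hyp
    unfold sigma2 at hyp ⊢
    rw [trace_mul_transpose, det_mul_transpose] at hyp ⊢
    set p := B i 0 with hp; set q := B i 1 with hq
    set r := B j 0 with hr; set s := B j 1 with hs
    obtain ⟨H2, H1⟩ := fwd _ _ _ hc'0 hyp
    have hTc : (t*p)^2 + q^2 + (t*r)^2 + s^2 = t^2 * (p^2+r^2) + (q^2+s^2) := by ring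
    have hDc : (t*p*s - q*(t*r))^2 = t^2 * ((p*s - q*r)^2) := by ring
    rw [hTc] at H2 H1
    rw [hDc] at H1
    have hkey := key (1 - b^2) (t^2) (p^2 + r^2) (q^2 + s^2) ((p*s - q*r)^2) (p*q + r*s)
      (1/(n:ℝ)) (1/((n:ℝ)-1)) hu0 (by nlinarith [hb]) ht2 (one_div_pos.mpr hnpos) hcc
      (by positivity) (by positivity) (by positivity) (by ring) H2 H1
    refine bwd _ _ _ (one_div_pos.mpr hnpos).le ?_ ?_
    · linarith [hkey.1]
    · have h2 := hkey.2
      linarith [h2, (by ring : (1:ℝ)/(n:ℝ) * ((p^2+r^2) + (q^2+s^2))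
        = 1/(n:ℝ) * (p^2+q^2+r^2+s^2))]
end

section
/- Let n > 2 and let A be an n×2 real matrix with orthonormal columns (AᵀA = I₂), with rows r₁,…,rₙ ∈ ℝ². If every row satisfies ‖rᵢ‖² > 1/n, then there exist two distinct indices i, j such that ⟨rᵢ, rⱼ⟩² ≤ (‖rᵢ‖² − 1/n)(‖rⱼ‖² − 1/n). -/
open Matrix
open scoped RealInnerProductSpace

/-- Choice of a rotation angle `(co, si)` on the unit circle that kills the
quantity `co * si * Q + (co ^ 2 - si ^ 2) * R`. -/
private lemma exists_rot (Q R : ℝ) :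
    ∃ co si : ℝ, co ^ 2 + si ^ 2 = 1 ∧ co * si * Q + (co ^ 2 - si ^ 2) * R = 0 := by
  by_cases hR : R = 0
  · exact ⟨1, 0, by norm_num, by simp [hR]⟩
  · have hpos : 0 < Q ^ 2 + 4 * R ^ 2 := by positivity
    set ρ : ℝ := Real.sqrt (Q ^ 2 + 4 * R ^ 2) with hρdef
    have hρpos : 0 < ρ := Real.sqrt_pos.mpr hpos
    have hρ2 : ρ ^ 2 = Q ^ 2 + 4 * R ^ 2 := Real.sq_sqrt hpos.le
    set C2 : ℝ := -Q / ρ with hC2def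
    set S2 : ℝ := 2 * R / ρ with hS2def
    have hC2S2 : C2 ^ 2 + S2 ^ 2 = 1 := by
      field_simp [hC2def, hS2def]
      rw [hC2def, hS2def, div_pow, div_pow, hρ2, ← add_div, div_eq_one_iff_eq hpos.ne']
      ring
    have h1C2 : 0 ≤ 1 + C2 := by nlinarith [sq_nonneg (C2 + 1), sq_nonneg S2]
    set co : ℝ := Real.sqrt ((1 + C2) / 2) with hcodef
    have hco2 : co ^ 2 = (1 + C2) / 2 := Real.sq_sqrt (by linarith)
    by_cases hco : co = 0
    · exfalso
      have h1 : (1 + C2) / 2 = 0 := by rw [← hco2, hco]; ring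
      have hC2m1 : C2 = -1 := by linarith
      have hS20 : S2 = 0 := by nlinarith
      have hcontra := hS20
      rw [hS2def] at hcontra
      field_simp at hcontra
      exact hR (by linarith)
    · have hco2pos : 0 < co ^ 2 := by positivity
      have h1C2pos : 0 < 1 + C2 := by nlinarith
      refine ⟨co, S2 / (2 * co), ?_, ?_⟩
      · have hsi2 : (S2 / (2 * co)) ^ 2 = (1 - C2) / 2 := by
          rw [div_pow]
          have hS2sq : S2 ^ 2 = 1 - C2 ^ 2 := by linarith
          rw [hS2sq]
          rw [mul_pow, hco2]
          field_simp
          ring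
        rw [hsi2, hco2]; ring
      · have hcosi : co * (S2 / (2 * co)) = S2 / 2 := by
          field_simp
        have hsi2 : (S2 / (2 * co)) ^ 2 = (1 - C2) / 2 := by
          rw [div_pow]
          have hS2sq : S2 ^ 2 = 1 - C2 ^ 2 := by linarith
          rw [hS2sq]
          rw [mul_pow, hco2]
          field_simp
          ring
        rw [mul_comm co (S2 / (2*co))] at hcosi ⊢
        rw [hcosi, hsi2, hco2]
        rw [hS2def, hC2def]
        field_simp
        ring

/-- Rotate a pair of orthonormal vectors so that additionally
`∑ i, u i * v i * (u i ^ 2 + v i ^ 2) = 0`, preserving all rotation-invariant data. -/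
private lemma rotate {n : ℕ} (x y : Fin n → ℝ)
    (hx : ∑ i, x i ^ 2 = 1) (hy : ∑ i, y i ^ 2 = 1) (hxy : ∑ i, x i * y i = 0) :
    ∃ u v : Fin n → ℝ, (∑ i, u i ^ 2 = 1) ∧ (∑ i, v i ^ 2 = 1) ∧ (∑ i, u i * v i = 0) ∧
      (∑ i, u i * v i * (u i ^ 2 + v i ^ 2) = 0) ∧
      (∀ i, u i ^ 2 + v i ^ 2 = x i ^ 2 + y i ^ 2) ∧
      (∀ i j, u i * u j + v i * v j = x i * x j + y i * y j) := by
  obtain ⟨co, si, hcs, horth⟩ := exists_rot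
    (∑ i, (y i ^ 2 - x i ^ 2) * (x i ^ 2 + y i ^ 2)) (∑ i, x i * y i * (x i ^ 2 + y i ^ 2))
  refine ⟨fun i => co * x i + si * y i, fun i => -si * x i + co * y i, ?_, ?_, ?_, ?_, ?_, ?_⟩
  · have h1 : ∀ i, (co * x i + si * y i) ^ 2
        = co ^ 2 * x i ^ 2 + (2 * co * si) * (x i * y i) + si ^ 2 * y i ^ 2 := by
      intro i; ring
    rw [Finset.sum_congr rfl (fun i _ => h1 i)]
    rw [Finset.sum_add_distrib, Finset.sum_add_distrib, ← Finset.mul_sum, ← Finset.mul_sum,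
      ← Finset.mul_sum, hx, hy, hxy]
    linarith
  · have h1 : ∀ i, (-si * x i + co * y i) ^ 2
        = si ^ 2 * x i ^ 2 - (2 * co * si) * (x i * y i) + co ^ 2 * y i ^ 2 := by
      intro i; ring
    rw [Finset.sum_congr rfl (fun i _ => h1 i)]
    rw [Finset.sum_add_distrib, Finset.sum_sub_distrib, ← Finset.mul_sum, ← Finset.mul_sum,
      ← Finset.mul_sum, hx, hy, hxy]
    linarith
  · have h1 : ∀ i, (co * x i + si * y i) * (-si * x i + co * y i)
        = (co * si) * (y i ^ 2 - x i ^ 2) + (co ^ 2 - si ^ 2) * (x i * y i) := by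
      intro i; ring
    rw [Finset.sum_congr rfl (fun i _ => h1 i)]
    rw [Finset.sum_add_distrib, ← Finset.mul_sum, ← Finset.mul_sum]
    have h2 : ∑ i, (y i ^ 2 - x i ^ 2) = 0 := by
      rw [Finset.sum_sub_distrib, hx, hy]; ring
    rw [h2, hxy]; ring
  · have h1 : ∀ i, (co * x i + si * y i) * (-si * x i + co * y i)
        * ((co * x i + si * y i) ^ 2 + (-si * x i + co * y i) ^ 2)
        = (co ^ 2 + si ^ 2) * ((co * si) * ((y i ^ 2 - x i ^ 2) * (x i ^ 2 + y i ^ 2))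
          + (co ^ 2 - si ^ 2) * (x i * y i * (x i ^ 2 + y i ^ 2))) := by
      intro i; ring
    rw [Finset.sum_congr rfl (fun i _ => h1 i)]
    rw [← Finset.mul_sum, Finset.sum_add_distrib, ← Finset.mul_sum, ← Finset.mul_sum]
    linear_combination (co ^ 2 + si ^ 2) * horth
  · intro i
    linear_combination (x i ^ 2 + y i ^ 2) * hcs
  · intro i j
    linear_combination (x i * x j + y i * y j) * hcs

/-- The analytic core: an orthonormal pair of vectors, normalized so that
`∑ i, u i * v i * (u i ^ 2 + v i ^ 2) = 0`, with all "row norms" exceeding `1/n`,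
has two rows `i ≠ j` with `⟨row i, row j⟩² ≤ (‖row i‖² - 1/n)(‖row j‖² - 1/n)`. -/
private lemma key_s4 {n : ℕ} (hn : 0 < n) (u v : Fin n → ℝ)
    (h1 : ∑ i, u i ^ 2 = 1) (h2 : ∑ i, v i ^ 2 = 1) (h3 : ∑ i, u i * v i = 0)
    (h4 : ∑ i, u i * v i * (u i ^ 2 + v i ^ 2) = 0)
    (h5 : ∀ i, 1 / (n : ℝ) < u i ^ 2 + v i ^ 2) :
    ∃ i j, i ≠ j ∧ (u i * u j + v i * v j) ^ 2 ≤
      (u i ^ 2 + v i ^ 2 - 1 / (n : ℝ)) * (u j ^ 2 + v j ^ 2 - 1 / (n : ℝ)) := by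
  by_contra hcon
  push_neg at hcon
  have hn' : (0 : ℝ) < n := by exact_mod_cast hn
  set N : ℝ := 1 / (n : ℝ) with hNdef
  have hNpos : 0 < N := by positivity
  have hnN : (n : ℝ) * N = 1 := by rw [hNdef, mul_one_div, div_self hn'.ne']
  -- row sums of squared cross products
  have hrow : ∀ i, ∑ j, (u i * v j - u j * v i) ^ 2 = u i ^ 2 + v i ^ 2 := by
    intro i
    have hq : ∀ j, (u i * v j - u j * v i) ^ 2
        = u i ^ 2 * v j ^ 2 - (2 * (u i * v i)) * (u j * v j) + v i ^ 2 * u j ^ 2 := by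
      intro j; ring
    rw [Finset.sum_congr rfl (fun j _ => hq j)]
    rw [Finset.sum_add_distrib, Finset.sum_sub_distrib, ← Finset.mul_sum, ← Finset.mul_sum,
      ← Finset.mul_sum, h1, h2, h3]
    ring
  -- column sums
  have hcol : ∀ j, ∑ i, (u i * v j - u j * v i) ^ 2 = u j ^ 2 + v j ^ 2 := by
    intro j
    have hq : ∀ i, (u i * v j - u j * v i) ^ 2 = (u j * v i - u i * v j) ^ 2 := by
      intro i; ring
    rw [Finset.sum_congr rfl (fun i _ => hq i)]
    exact hrow j
  -- moments
  set A : ℝ := ∑ i, (u i ^ 2) ^ 2 with hAdef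
  set B : ℝ := ∑ i, (v i ^ 2) ^ 2 with hBdef
  set D : ℝ := ∑ i, u i ^ 2 * v i ^ 2 with hDdef
  set E : ℝ := ∑ i, u i ^ 3 * v i with hEdef
  set F : ℝ := ∑ i, u i * v i ^ 3 with hFdef
  have hEF : E + F = 0 := by
    have hq : ∀ i, u i * v i * (u i ^ 2 + v i ^ 2) = u i ^ 3 * v i + u i * v i ^ 3 := by
      intro i; ring
    rw [hEdef, hFdef, ← Finset.sum_add_distrib]
    rw [← Finset.sum_congr rfl (fun i _ => hq i)]
    exact h4
  -- sum of s
  have hstot : ∑ i, (u i ^ 2 + v i ^ 2) = 2 := by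
    rw [Finset.sum_add_distrib, h1, h2]; norm_num
  -- m2
  have hm2 : ∑ i, (u i ^ 2 + v i ^ 2) ^ 2 = A + 2 * D + B := by
    have hq : ∀ i, (u i ^ 2 + v i ^ 2) ^ 2
        = (u i ^ 2) ^ 2 + 2 * (u i ^ 2 * v i ^ 2) + (v i ^ 2) ^ 2 := by
      intro i; ring
    rw [Finset.sum_congr rfl (fun i _ => hq i)]
    rw [Finset.sum_add_distrib, Finset.sum_add_distrib, ← Finset.mul_sum]
  -- quartic double sum
  have hS1 : ∑ i, ∑ j, (u i * v j - u j * v i) ^ 4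
      = 2 * A * B + 6 * D ^ 2 - 8 * E * F := by
    have hrowq : ∀ i, ∑ j, (u i * v j - u j * v i) ^ 4
        = (u i ^ 2) ^ 2 * B - (4 * (u i ^ 3 * v i)) * F + (6 * (u i ^ 2 * v i ^ 2)) * D
          - (4 * (u i * v i ^ 3)) * E + (v i ^ 2) ^ 2 * A := by
      intro i
      have hq : ∀ j, (u i * v j - u j * v i) ^ 4
          = (u i ^ 2) ^ 2 * (v j ^ 2) ^ 2 - (4 * (u i ^ 3 * v i)) * (u j * v j ^ 3)
            + (6 * (u i ^ 2 * v i ^ 2)) * (u j ^ 2 * v j ^ 2)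
            - (4 * (u i * v i ^ 3)) * (u j ^ 3 * v j) + (v i ^ 2) ^ 2 * (u j ^ 2) ^ 2 := by
        intro j; ring
      rw [Finset.sum_congr rfl (fun j _ => hq j)]
      rw [Finset.sum_add_distrib, Finset.sum_sub_distrib, Finset.sum_add_distrib,
        Finset.sum_sub_distrib, ← Finset.mul_sum, ← Finset.mul_sum, ← Finset.mul_sum,
        ← Finset.mul_sum, ← Finset.mul_sum]
    rw [Finset.sum_congr rfl (fun i _ => hrowq i)]
    rw [Finset.sum_add_distrib, Finset.sum_sub_distrib, Finset.sum_add_distrib,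
      Finset.sum_sub_distrib, ← Finset.sum_mul, ← Finset.sum_mul, ← Finset.sum_mul,
      ← Finset.sum_mul, ← Finset.sum_mul]
    have c1 : ∑ i, 4 * (u i ^ 3 * v i) = 4 * E := by
      rw [hEdef]; exact (Finset.mul_sum _ _ _).symm
    have c2 : ∑ i, 6 * (u i ^ 2 * v i ^ 2) = 6 * D := by
      rw [hDdef]; exact (Finset.mul_sum _ _ _).symm
    have c3 : ∑ i, 4 * (u i * v i ^ 3) = 4 * F := by
      rw [hFdef]; exact (Finset.mul_sum _ _ _).symm
    rw [c1, c2, c3]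
    ring
  -- weighted sums
  have hS2 : ∑ i, ∑ j, (u i * v j - u j * v i) ^ 2 * (u i ^ 2 + v i ^ 2)
      = A + 2 * D + B := by
    have hq : ∀ i, ∑ j, (u i * v j - u j * v i) ^ 2 * (u i ^ 2 + v i ^ 2)
        = (u i ^ 2 + v i ^ 2) ^ 2 := by
      intro i
      rw [← Finset.sum_mul, hrow i]
      ring
    rw [Finset.sum_congr rfl (fun i _ => hq i)]
    exact hm2
  have hS3 : ∑ i, ∑ j, (u i * v j - u j * v i) ^ 2 * (u j ^ 2 + v j ^ 2)
      = A + 2 * D + B := by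
    rw [Finset.sum_comm]
    have hq : ∀ j, ∑ i, (u i * v j - u j * v i) ^ 2 * (u j ^ 2 + v j ^ 2)
        = (u j ^ 2 + v j ^ 2) ^ 2 := by
      intro j
      rw [← Finset.sum_mul, hcol j]
      ring
    rw [Finset.sum_congr rfl (fun j _ => hq j)]
    exact hm2
  have hS4 : ∑ i, ∑ j, (u i * v j - u j * v i) ^ 2 = 2 := by
    rw [Finset.sum_congr rfl (fun i _ => hrow i)]
    exact hstot
  -- main identity for T
  have hTid : ∑ i, ∑ j, (u i * v j - u j * v i) ^ 2
        * ((u i ^ 2 + v i ^ 2 - N) * (u j ^ 2 + v j ^ 2 - N) - (u i * u j + v i * v j) ^ 2)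
      = 2 * A * B + 6 * D ^ 2 - 8 * E * F - 2 * N * (A + 2 * D + B) + 2 * N ^ 2 := by
    have hq : ∀ (i j : Fin n), (u i * v j - u j * v i) ^ 2
        * ((u i ^ 2 + v i ^ 2 - N) * (u j ^ 2 + v j ^ 2 - N) - (u i * u j + v i * v j) ^ 2)
        = (u i * v j - u j * v i) ^ 4
          - N * ((u i * v j - u j * v i) ^ 2 * (u i ^ 2 + v i ^ 2))
          - N * ((u i * v j - u j * v i) ^ 2 * (u j ^ 2 + v j ^ 2))
          + N ^ 2 * (u i * v j - u j * v i) ^ 2 := by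
      intro i j; ring
    have step1 : ∀ i, ∑ j, ((u i * v j - u j * v i) ^ 4
          - N * ((u i * v j - u j * v i) ^ 2 * (u i ^ 2 + v i ^ 2))
          - N * ((u i * v j - u j * v i) ^ 2 * (u j ^ 2 + v j ^ 2))
          + N ^ 2 * (u i * v j - u j * v i) ^ 2)
        = (∑ j, (u i * v j - u j * v i) ^ 4)
          - N * (∑ j, (u i * v j - u j * v i) ^ 2 * (u i ^ 2 + v i ^ 2))
          - N * (∑ j, (u i * v j - u j * v i) ^ 2 * (u j ^ 2 + v j ^ 2))
          + N ^ 2 * (∑ j, (u i * v j - u j * v i) ^ 2) := by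
      intro i
      rw [Finset.sum_add_distrib, Finset.sum_sub_distrib, Finset.sum_sub_distrib,
        ← Finset.mul_sum, ← Finset.mul_sum, ← Finset.mul_sum]
    rw [Finset.sum_congr rfl (fun i _ => Finset.sum_congr rfl (fun j _ => hq i j))]
    rw [Finset.sum_congr rfl (fun i _ => step1 i)]
    rw [Finset.sum_add_distrib, Finset.sum_sub_distrib, Finset.sum_sub_distrib,
      ← Finset.mul_sum, ← Finset.mul_sum, ← Finset.mul_sum]
    rw [hS1, hS2, hS3, hS4]
    ring
  -- Cauchy–Schwarz
  have hCS : (D - N) ^ 2 ≤ (A - N) * (B - N) := by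
    have hcs := Finset.sum_mul_sq_le_sq_mul_sq Finset.univ
      (fun i => u i ^ 2 - N) (fun i => v i ^ 2 - N)
    have hNN : (n : ℝ) * (N * N) = N := by
      rw [← mul_assoc, hnN, one_mul]
    have e1 : ∑ i, (u i ^ 2 - N) * (v i ^ 2 - N) = D - N := by
      have hq : ∀ i, (u i ^ 2 - N) * (v i ^ 2 - N)
          = u i ^ 2 * v i ^ 2 - N * v i ^ 2 - N * u i ^ 2 + N * N := by
        intro i; ring
      rw [Finset.sum_congr rfl (fun i _ => hq i)]
      rw [Finset.sum_add_distrib, Finset.sum_sub_distrib, Finset.sum_sub_distrib,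
        ← Finset.mul_sum, ← Finset.mul_sum, h1, h2, Finset.sum_const, Finset.card_univ,
        Fintype.card_fin, nsmul_eq_mul, hNN]
      ring
    have e2 : ∑ i, (u i ^ 2 - N) ^ 2 = A - N := by
      have hq : ∀ i, (u i ^ 2 - N) ^ 2 = (u i ^ 2) ^ 2 - (2 * N) * u i ^ 2 + N * N := by
        intro i; ring
      rw [Finset.sum_congr rfl (fun i _ => hq i)]
      rw [Finset.sum_add_distrib, Finset.sum_sub_distrib, ← Finset.mul_sum, h1,
        Finset.sum_const, Finset.card_univ, Fintype.card_fin, nsmul_eq_mul, hNN]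
      ring
    have e3 : ∑ i, (v i ^ 2 - N) ^ 2 = B - N := by
      have hq : ∀ i, (v i ^ 2 - N) ^ 2 = (v i ^ 2) ^ 2 - (2 * N) * v i ^ 2 + N * N := by
        intro i; ring
      rw [Finset.sum_congr rfl (fun i _ => hq i)]
      rw [Finset.sum_add_distrib, Finset.sum_sub_distrib, ← Finset.mul_sum, h2,
        Finset.sum_const, Finset.card_univ, Fintype.card_fin, nsmul_eq_mul, hNN]
      ring
    rw [e1, e2, e3] at hcs
    exact hcs
  -- T is nonnegative
  have hTnonneg : 0 ≤ ∑ i, ∑ j, (u i * v j - u j * v i) ^ 2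
      * ((u i ^ 2 + v i ^ 2 - N) * (u j ^ 2 + v j ^ 2 - N) - (u i * u j + v i * v j) ^ 2) := by
    rw [hTid]
    have hFE : F = -E := by linarith
    rw [hFE]
    nlinarith [hCS, sq_nonneg (2 * D - N), sq_nonneg E]
  -- each term is nonpositive
  have hterm : ∀ (i j : Fin n), (u i * v j - u j * v i) ^ 2
      * ((u i ^ 2 + v i ^ 2 - N) * (u j ^ 2 + v j ^ 2 - N) - (u i * u j + v i * v j) ^ 2) ≤ 0 := by
    intro i j
    rcases eq_or_ne i j with rfl | hij
    · have hz : u i * v i - u i * v i = 0 := by ring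
      rw [hz]
      simp
    · have hx := hcon i j hij
      have hneg : (u i ^ 2 + v i ^ 2 - N) * (u j ^ 2 + v j ^ 2 - N)
          - (u i * u j + v i * v j) ^ 2 ≤ 0 := by linarith
      exact mul_nonpos_of_nonneg_of_nonpos (sq_nonneg _) hneg
  -- T = 0 hence every term vanishes
  have hT0 : ∑ i, ∑ j, (u i * v j - u j * v i) ^ 2
      * ((u i ^ 2 + v i ^ 2 - N) * (u j ^ 2 + v j ^ 2 - N) - (u i * u j + v i * v j) ^ 2) = 0 := by
    refine le_antisymm ?_ hTnonneg
    exact Finset.sum_nonpos (fun i _ => Finset.sum_nonpos (fun j _ => hterm i j))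
  have hinner0 := (Finset.sum_eq_zero_iff_of_nonpos
    (fun i _ => Finset.sum_nonpos (fun j _ => hterm i j))).mp hT0
  have hterm0 : ∀ (i j : Fin n), (u i * v j - u j * v i) ^ 2
      * ((u i ^ 2 + v i ^ 2 - N) * (u j ^ 2 + v j ^ 2 - N) - (u i * u j + v i * v j) ^ 2) = 0 := by
    intro i j
    have := (Finset.sum_eq_zero_iff_of_nonpos (fun j _ => hterm i j)).mp
      (hinner0 i (Finset.mem_univ i))
    exact this j (Finset.mem_univ j)
  -- cross products vanish
  have hc0 : ∀ (i j : Fin n), i ≠ j → u i * v j - u j * v i = 0 := by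
    intro i j hij
    have ht := hterm0 i j
    have hx := hcon i j hij
    rcases mul_eq_zero.mp ht with h | h
    · exact sq_eq_zero_iff.mp h
    · linarith
  -- contradiction with the row identity
  have hrow0 := hrow ⟨0, hn⟩
  have hzero : ∑ j, (u ⟨0, hn⟩ * v j - u j * v ⟨0, hn⟩) ^ 2 = 0 := by
    refine Finset.sum_eq_zero (fun j _ => ?_)
    rcases eq_or_ne (⟨0, hn⟩ : Fin n) j with rfl | hij
    · have hz : u (⟨0, hn⟩ : Fin n) * v ⟨0, hn⟩ - u ⟨0, hn⟩ * v ⟨0, hn⟩ = 0 := by ring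
      rw [hz]
      norm_num
    · rw [hc0 ⟨0, hn⟩ j hij]
      norm_num
  rw [hzero] at hrow0
  have h50 := h5 ⟨0, hn⟩
  rw [← hrow0] at h50
  linarith [hNpos]

theorem stmt_4 (n : ℕ) (hn : 2 < n) (A : Matrix (Fin n) (Fin 2) ℝ) (hA : Aᵀ * A = 1)
    (r : Fin n → EuclideanSpace ℝ (Fin 2)) (hr : ∀ i j, r i j = A i j)
    (hnorm : ∀ i, 1 / (n : ℝ) < ‖r i‖ ^ 2) :
    ∃ i j, i ≠ j ∧
      ⟪r i, r j⟫ ^ 2 ≤ (‖r i‖ ^ 2 - 1 / (n : ℝ)) * (‖r j‖ ^ 2 - 1 / (n : ℝ)) := by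
  -- orthonormality of the two columns of A
  have h00 : ∑ i, A i 0 * A i 0 = 1 := by
    have := congrFun (congrFun hA 0) 0
    rw [Matrix.mul_apply] at this
    simpa [Matrix.transpose_apply, Matrix.one_apply] using this
  have h11 : ∑ i, A i 1 * A i 1 = 1 := by
    have := congrFun (congrFun hA 1) 1
    rw [Matrix.mul_apply] at this
    simpa [Matrix.transpose_apply, Matrix.one_apply] using this
  have h01 : ∑ i, A i 0 * A i 1 = 0 := by
    have := congrFun (congrFun hA 0) 1
    rw [Matrix.mul_apply] at this
    simpa [Matrix.transpose_apply, Matrix.one_apply] using this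
  -- norms and inner products in coordinates
  have hnr : ∀ i, ‖r i‖ ^ 2 = A i 0 ^ 2 + A i 1 ^ 2 := by
    intro i
    rw [EuclideanSpace.norm_eq]
    rw [Real.sq_sqrt (by positivity)]
    simp [Fin.sum_univ_two, hr, sq_abs]
  have hir : ∀ i j, ⟪r i, r j⟫ = A i 0 * A j 0 + A i 1 * A j 1 := by
    intro i j
    rw [PiLp.inner_apply]
    simp [Fin.sum_univ_two, hr, RCLike.inner_apply, conj_trivial]
    ring
  -- pass to squared-sum form
  have hx : ∑ i, (A i 0) ^ 2 = 1 := by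
    rw [← h00]; exact Finset.sum_congr rfl (fun i _ => by ring)
  have hy : ∑ i, (A i 1) ^ 2 = 1 := by
    rw [← h11]; exact Finset.sum_congr rfl (fun i _ => by ring)
  -- rotate
  obtain ⟨u, v, hu1, hu2, hu3, hu4, hs, hg⟩ :=
    rotate (fun i => A i 0) (fun i => A i 1) hx hy h01
  have h5 : ∀ i, 1 / (n : ℝ) < u i ^ 2 + v i ^ 2 := by
    intro i
    rw [hs i]
    have := hnorm i
    rw [hnr i] at this
    exact this
  obtain ⟨i, j, hij, hineq⟩ := key_s4 (by omega) u v hu1 hu2 hu3 hu4 h5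
  refine ⟨i, j, hij, ?_⟩
  rw [hir i j, hnr i, hnr j]
  rw [← hg i j, ← hs i, ← hs j]
  exact hineq
end

section
/- Let n > 2 and let A be an n×2 real matrix with orthonormal columns (AᵀA = I₂), with rows rᵢ = (xᵢ, yᵢ). Let W be the n×2 matrix with rows wᵢ = (xᵢ² − yᵢ², 2xᵢyᵢ), let z ∈ ℝⁿ have entries zᵢ = ‖rᵢ‖² − 2/n, and let G = WWᵀ − zzᵀ. Then Tr(G) = 4/n, and consequently the largest eigenvalue of G is at least 2/n. -/
open Matrix

private lemma aux_dp_sum_left {m k : Type*} [Fintype m] [Fintype k] (f : k → m → ℝ)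
    (w : m → ℝ) : (∑ i, f i) ⬝ᵥ w = ∑ i, f i ⬝ᵥ w := by
  simp only [dotProduct, Finset.sum_apply, Finset.sum_mul]
  exact Finset.sum_comm

private lemma aux_dp_sum_right {m k : Type*} [Fintype m] [Fintype k] (v : m → ℝ)
    (f : k → m → ℝ) : v ⬝ᵥ (∑ i, f i) = ∑ i, v ⬝ᵥ f i := by
  simp only [dotProduct, Finset.sum_apply, Finset.mul_sum]
  exact Finset.sum_comm

theorem stmt_11 (n : ℕ) (hn : 2 < n) (A : Matrix (Fin n) (Fin 2) ℝ) (hA : Aᵀ * A = 1)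
    (W : Matrix (Fin n) (Fin 2) ℝ)
    (hW : ∀ i, W i 0 = A i 0 ^ 2 - A i 1 ^ 2 ∧ W i 1 = 2 * A i 0 * A i 1)
    (z : Fin n → ℝ) (hz : ∀ i, z i = (A i 0 ^ 2 + A i 1 ^ 2) - 2 / (n : ℝ))
    (G : Matrix (Fin n) (Fin n) ℝ) (hG : G = W * Wᵀ - Matrix.vecMulVec z z)
    (hGh : G.IsHermitian) :
    Matrix.trace G = 4 / (n : ℝ) ∧ 2 / (n : ℝ) ≤ ⨆ i, hGh.eigenvalues i := by
  have hn0 : (0:ℝ) < n := by positivity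
  have hnn : (n:ℝ) ≠ 0 := ne_of_gt hn0
  have h00 : ∑ i, A i 0 * A i 0 = 1 := by
    have := congrFun (congrFun hA 0) 0
    simpa [Matrix.mul_apply, Matrix.one_apply, mul_comm] using this
  have h11 : ∑ i, A i 1 * A i 1 = 1 := by
    have := congrFun (congrFun hA 1) 1
    simpa [Matrix.mul_apply, Matrix.one_apply, mul_comm] using this
  have hdiag : ∀ i, G i i =
      4/(n:ℝ) * (A i 0 * A i 0) + 4/(n:ℝ) * (A i 1 * A i 1) - 4/(n:ℝ)^2 := by
    intro i
    obtain ⟨hw0, hw1⟩ := hW i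
    simp only [hG, Matrix.sub_apply, Matrix.mul_apply, Matrix.vecMulVec_apply,
      Matrix.transpose_apply, Fin.sum_univ_two, hw0, hw1, hz i]
    field_simp
    ring
  have htr : Matrix.trace G = 4 / (n : ℝ) := by
    rw [Matrix.trace]
    have : ∑ i, G.diag i =
        ∑ i, (4/(n:ℝ) * (A i 0 * A i 0) + 4/(n:ℝ) * (A i 1 * A i 1) - 4/(n:ℝ)^2) :=
      Finset.sum_congr rfl fun i _ => hdiag i
    rw [this]
    rw [Finset.sum_sub_distrib, Finset.sum_add_distrib, ← Finset.mul_sum, ← Finset.mul_sum,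
      h00, h11, Finset.sum_const, Finset.card_univ, Fintype.card_fin, nsmul_eq_mul]
    field_simp
    ring
  refine ⟨htr, ?_⟩
  -- eigenvalues
  set μ := hGh.eigenvalues with hμ
  set U : Matrix (Fin n) (Fin n) ℝ := (hGh.eigenvectorUnitary : Matrix (Fin n) (Fin n) ℝ) with hU
  have hUU : star U * U = 1 := Unitary.coe_star_mul_self hGh.eigenvectorUnitary
  have hsum : ∑ i, μ i = 4 / (n:ℝ) := by
    have hst := hGh.spectral_theorem
    calc ∑ i, μ i = Matrix.trace (Matrix.diagonal (RCLike.ofReal ∘ μ) : Matrix (Fin n) (Fin n) ℝ) := by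
          simp [Matrix.trace_diagonal]
      _ = Matrix.trace G := by
          rw [hst, Unitary.conjStarAlgAut_apply, Matrix.trace_mul_cycle,
            show star (hGh.eigenvectorUnitary : Matrix (Fin n) (Fin n) ℝ) *
              (hGh.eigenvectorUnitary : Matrix (Fin n) (Fin n) ℝ) = 1 from
              Unitary.coe_star_mul_self _, Matrix.one_mul]
      _ = 4/(n:ℝ) := htr
  set B := hGh.eigenvectorBasis with hB
  have hdotB : ∀ i j, (⇑(B i) ⬝ᵥ ⇑(B j)) = if i = j then (1:ℝ) else 0 := by
    intro i j
    have h1 : ∀ k, (⇑(B i)) k = U k i := fun k => (hGh.eigenvectorUnitary_apply k i).symm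
    have h2 : ∀ k, (⇑(B j)) k = U k j := fun k => (hGh.eigenvectorUnitary_apply k j).symm
    have := congrFun (congrFun hUU i) j
    simp only [Matrix.mul_apply, Matrix.one_apply, Matrix.star_apply, star_trivial] at this
    simp only [dotProduct, h1, h2]
    rw [← this]
  have hmulB : ∀ i, G *ᵥ ⇑(B i) = μ i • ⇑(B i) := fun i => hGh.mulVec_eigenvectorBasis i
  have hbdd : BddAbove (Set.range μ) := (Set.finite_range μ).bddAbove
  have hle : ∀ i, μ i ≤ ⨆ i, μ i := fun i => le_ciSup hbdd i
  by_contra hcon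
  push_neg at hcon
  set L := ⨆ i, μ i with hL
  -- L > 0
  have hex : ∃ i, 0 < μ i := by
    by_contra hno
    push_neg at hno
    have : ∑ i, μ i ≤ 0 := Finset.sum_nonpos fun i _ => hno i
    rw [hsum] at this
    have : (0:ℝ) < 4/(n:ℝ) := by positivity
    linarith
  obtain ⟨i0, hi0⟩ := hex
  have hLpos : 0 < L := lt_of_lt_of_le hi0 (hle i0)
  classical
  set S : Finset (Fin n) := Finset.univ.filter (fun i => 0 < μ i) with hS
  -- card S ≤ 2
  have hcard : S.card ≤ 2 := by
    by_contra hc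
    push_neg at hc
    have hcard3 : 2 < Fintype.card ↥S := by simpa using hc
    set g : ↥S → (Fin 2 → ℝ) := fun i => Wᵀ *ᵥ ⇑(B i) with hg
    have hnli : ¬ LinearIndependent ℝ g := by
      intro hli
      have := hli.fintype_card_le_finrank
      rw [Module.finrank_fintype_fun_eq_card] at this
      simp at this
      omega
    rw [Fintype.not_linearIndependent_iff] at hnli
    obtain ⟨c, hcsum, j0, hj0⟩ := hnli
    set v : Fin n → ℝ := ∑ i : ↥S, c i • ⇑(B i) with hv
    have hWv : Wᵀ *ᵥ v = 0 := by
      rw [hv]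
      simp only [← Matrix.mulVecLin_apply, map_sum, _root_.map_smul]
      simp only [Matrix.mulVecLin_apply]
      exact hcsum
    have hGv : G *ᵥ v = ∑ i : ↥S, (c i * μ i) • ⇑(B i) := by
      rw [hv]
      simp only [← Matrix.mulVecLin_apply, map_sum, _root_.map_smul]
      simp only [Matrix.mulVecLin_apply]
      refine Finset.sum_congr rfl fun i _ => ?_
      rw [hmulB (i : Fin n), smul_smul]
    have hquad : v ⬝ᵥ (G *ᵥ v) = ∑ i : ↥S, c i ^ 2 * μ i := by
      rw [hGv, hv, aux_dp_sum_left]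
      refine Finset.sum_congr rfl fun i _ => ?_
      rw [smul_dotProduct, aux_dp_sum_right, Finset.sum_eq_single i]
      · rw [dotProduct_smul, hdotB (i : Fin n) (i : Fin n)]
        simp only [smul_eq_mul]
        norm_num
        ring
      · intro j _ hji
        rw [dotProduct_smul, hdotB (i : Fin n) (j : Fin n)]
        have hne : (i : Fin n) ≠ (j : Fin n) := Subtype.coe_injective.ne (Ne.symm hji)
        simp [hne]
      · simp
    have hpos : 0 < v ⬝ᵥ (G *ᵥ v) := by
      rw [hquad]
      refine Finset.sum_pos' (fun i _ => ?_) ⟨j0, Finset.mem_univ _, ?_⟩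
      · have : 0 < μ (i:Fin n) := (Finset.mem_filter.mp i.2).2
        positivity
      · have hμj : 0 < μ (j0:Fin n) := (Finset.mem_filter.mp j0.2).2
        have hc2 : 0 < c j0 ^ 2 := sq_pos_of_ne_zero hj0
        positivity
    have hnonpos : v ⬝ᵥ (G *ᵥ v) ≤ 0 := by
      have hzz : (Matrix.vecMulVec z z) *ᵥ v = (z ⬝ᵥ v) • z := by
        funext k
        simp only [Matrix.mulVec, Matrix.vecMulVec_apply, dotProduct, Pi.smul_apply,
          smul_eq_mul, Finset.sum_mul]
        exact Finset.sum_congr rfl fun x _ => by ring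
      rw [hG, Matrix.sub_mulVec, ← Matrix.mulVec_mulVec, hWv, Matrix.mulVec_zero, hzz,
        dotProduct_sub, dotProduct_smul]
      have : v ⬝ᵥ z = z ⬝ᵥ v := dotProduct_comm v z
      simp [this]
      nlinarith [sq_nonneg (z ⬝ᵥ v)]
    linarith
  -- conclude
  have hsplit : ∑ i, μ i ≤ ∑ i ∈ S, μ i := by
    have := Finset.sum_filter_add_sum_filter_not Finset.univ (fun i => 0 < μ i) μ
    have hneg : ∑ i ∈ Finset.univ.filter (fun i => ¬ 0 < μ i), μ i ≤ 0 :=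
      Finset.sum_nonpos fun i hi => le_of_not_gt (Finset.mem_filter.mp hi).2
    rw [hS]
    linarith
  have hSL : ∑ i ∈ S, μ i ≤ S.card * L :=
    calc ∑ i ∈ S, μ i ≤ ∑ _i ∈ S, L := Finset.sum_le_sum fun i _ => hle i
      _ = S.card * L := by rw [Finset.sum_const, nsmul_eq_mul]
  have hfin : (S.card : ℝ) * L ≤ 2 * L := by
    have : (S.card : ℝ) ≤ 2 := by exact_mod_cast hcard
    nlinarith
  have h4 : (4:ℝ)/n < 4/n := by
    calc (4:ℝ)/n = ∑ i, μ i := hsum.symm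
      _ ≤ S.card * L := le_trans hsplit hSL
      _ ≤ 2 * L := hfin
      _ < 2 * (2/n) := by nlinarith
      _ = 4/n := by ring
  linarith
end

section
/- Let n > 2 and let A be an n×2 real matrix with orthonormal columns (AᵀA = I₂), with rows rᵢ = (xᵢ, yᵢ). Set wᵢ = (xᵢ² − yᵢ², 2xᵢyᵢ) and zᵢ = ‖rᵢ‖² − 2/n. Then there exist indices i, j (not necessarily distinct) such that ⟨wᵢ, wⱼ⟩ − zᵢzⱼ + 2/n² ≤ 0. -/
set_option maxHeartbeats 1000000

open Matrix
open scoped RealInnerProductSpace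

/-- Auxiliary 2×2-eigenvalue inequality: if `B = [[p, r],[r, q]]` is PSD with
`tr B = Zq + 2c` and the vector `y` satisfies the Cauchy–Schwarz bound
`‖y‖⁴ ≤ Zq · yᵀBy`, then `‖B‖² - 2‖y‖² + Zq² ≥ 2c²`. -/
private lemma key_ineq (p q r Zq y1 y2 c : ℝ) (hp0 : 0 ≤ p) (hq0 : 0 ≤ q) (hZq0 : 0 ≤ Zq)
    (hc : 0 < c) (hdet : r^2 ≤ p*q) (hpq : p + q = Zq + 2*c)
    (hCSy : (y1^2 + y2^2)^2 ≤ Zq * (p*y1^2 + 2*(r*(y1*y2)) + q*y2^2)) :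
    2*c^2 ≤ p^2 + q^2 + 2*r^2 + Zq^2 - 2*(y1^2 + y2^2) := by
  have hdsc0 : (0:ℝ) ≤ (p - q)^2 + 4*r^2 := by positivity
  set s := Real.sqrt ((p - q)^2 + 4*r^2) with hs
  have hs0 : 0 ≤ s := Real.sqrt_nonneg _
  have hs2 : s^2 = (p - q)^2 + 4*r^2 := Real.sq_sqrt hdsc0
  have habs : |p - q| ≤ s := by
    rw [hs, ← Real.sqrt_sq_eq_abs]
    exact Real.sqrt_le_sqrt (by nlinarith [sq_nonneg r])
  obtain ⟨h1, h2⟩ := abs_le.mp habs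
  set L := (p + q + s)/2 with hL
  set M := (p + q - s)/2 with hM
  have hLp : p ≤ L := by rw [hL]; linarith
  have hLq : q ≤ L := by rw [hL]; linarith
  have hLMs : L + M = p + q := by rw [hL, hM]; ring
  have hLMm : L * M = p*q - r^2 := by rw [hL, hM]; linear_combination (-(1:ℝ)/4) * hs2
  have hL0 : 0 < L := by rw [hL]; nlinarith
  have hM0 : 0 ≤ M := by nlinarith [hLMm, hdet, hL0]
  have hLq2 : (L - p)*(L - q) = r^2 := by linear_combination L * hLMs - hLMm
  have hquad : p*y1^2 + 2*(r*(y1*y2)) + q*y2^2 ≤ L*(y1^2 + y2^2) := by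
    have key : (L-p)*(L*(y1^2+y2^2) - (p*y1^2 + 2*(r*(y1*y2)) + q*y2^2))
        = ((L-p)*y1 - r*y2)^2 := by linear_combination (y2^2) * hLq2
    rcases eq_or_lt_of_le hLp with heq|hlt
    · have hr0 : r = 0 := by
        have : r^2 = 0 := by rw [← hLq2, ← heq]; ring
        exact pow_eq_zero_iff (n := 2) (by norm_num) |>.mp this
      rw [hr0, ← heq]
      nlinarith [hLq, sq_nonneg y2, heq]
    · have hd : 0 ≤ (L-p) * (L*(y1^2+y2^2) - (p*y1^2 + 2*(r*(y1*y2)) + q*y2^2)) := by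
        rw [key]; positivity
      by_contra hcon
      push_neg at hcon
      have : (L-p) * (L*(y1^2+y2^2) - (p*y1^2 + 2*(r*(y1*y2)) + q*y2^2)) < 0 :=
        mul_neg_of_pos_of_neg (sub_pos.2 hlt) (by linarith)
      linarith
  have hey : y1^2 + y2^2 ≤ Zq * L := by
    have h0 : (0:ℝ) ≤ y1^2 + y2^2 := by positivity
    have h3 : (y1^2+y2^2)^2 ≤ Zq * (L*(y1^2+y2^2)) :=
      hCSy.trans (mul_le_mul_of_nonneg_left hquad hZq0)
    rcases eq_or_lt_of_le h0 with he|he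
    · rw [← he]; positivity
    · nlinarith [h3, he]
  have hL2M2 : L^2 + M^2 = p^2 + q^2 + 2*r^2 := by
    linear_combination (L + M + p + q) * hLMs - 2 * hLMm
  have hlin : L + M - Zq = 2*c := by linarith
  have h4 : (L + M - Zq)^2 = 4*c^2 := by rw [hlin]; ring
  have h5 : L^2 - 2*(Zq*L) + Zq^2 + M^2 ≥ 2*c^2 := by nlinarith [sq_nonneg (L - Zq - M), h4]
  linarith [hey, hL2M2, h5]

theorem stmt_14 (n : ℕ) (hn : 2 < n) (A : Matrix (Fin n) (Fin 2) ℝ) (hA : Aᵀ * A = 1)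
    (w : Fin n → EuclideanSpace ℝ (Fin 2))
    (hw : ∀ i, w i 0 = A i 0 ^ 2 - A i 1 ^ 2 ∧ w i 1 = 2 * A i 0 * A i 1)
    (z : Fin n → ℝ) (hz : ∀ i, z i = (A i 0 ^ 2 + A i 1 ^ 2) - 2 / (n : ℝ)) :
    ∃ i j, ⟪w i, w j⟫ - z i * z j + 2 / (n : ℝ) ^ 2 ≤ 0 := by
  by_contra hcon
  push_neg at hcon
  set N : ℝ := (n : ℝ) with hNdef
  have hN0 : (0:ℝ) < N := by
    rw [hNdef]
    have : 0 < n := by omega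
    exact_mod_cast this
  have hNne : N ≠ 0 := ne_of_gt hN0
  obtain ⟨W1, hW1⟩ : ∃ f : Fin n → ℝ, ∀ i, f i = A i 0 ^ 2 - A i 1 ^ 2 := ⟨_, fun _ => rfl⟩
  obtain ⟨W2, hW2⟩ : ∃ f : Fin n → ℝ, ∀ i, f i = 2 * A i 0 * A i 1 := ⟨_, fun _ => rfl⟩
  obtain ⟨m, hm⟩ : ∃ f : Fin n → ℝ, ∀ i, f i = A i 0 ^ 2 + A i 1 ^ 2 := ⟨_, fun _ => rfl⟩
  set c : ℝ := 2 / N with hc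
  have hc0 : 0 < c := by positivity
  have hNc : N * c = 2 := by rw [hc]; field_simp
  have hnc : (n : ℝ) * c = 2 := by rw [← hNdef]; exact hNc
  have hzm : ∀ i, z i = m i - c := fun i => by rw [hz i, hm i, hc, hNdef]
  have hmz : ∀ i, m i = z i + c := fun i => by rw [hzm i]; ring
  -- entries of AᵀA = 1
  have h00 : ∑ i, A i 0 * A i 0 = 1 := by
    have h := congrFun (congrFun hA 0) 0
    simpa [Matrix.mul_apply, Matrix.transpose_apply, Matrix.one_apply] using h
  have h11 : ∑ i, A i 1 * A i 1 = 1 := by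
    have h := congrFun (congrFun hA 1) 1
    simpa [Matrix.mul_apply, Matrix.transpose_apply, Matrix.one_apply] using h
  have h01 : ∑ i, A i 0 * A i 1 = 0 := by
    have h := congrFun (congrFun hA 0) 1
    simpa [Matrix.mul_apply, Matrix.transpose_apply, Matrix.one_apply] using h
  -- first-order sums
  have hSw1 : ∑ i, W1 i = 0 := by
    have e : ∀ i ∈ Finset.univ, W1 i = A i 0 * A i 0 - A i 1 * A i 1 := fun i _ => by
      rw [hW1 i]; ring
    rw [Finset.sum_congr rfl e, Finset.sum_sub_distrib, h00, h11]; ring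
  have hSw2 : ∑ i, W2 i = 0 := by
    have e : ∀ i ∈ Finset.univ, W2 i = 2 * (A i 0 * A i 1) := fun i _ => by
      rw [hW2 i]; ring
    rw [Finset.sum_congr rfl e, ← Finset.mul_sum, h01]; ring
  have hSm : ∑ i, m i = 2 := by
    have e : ∀ i ∈ Finset.univ, m i = A i 0 * A i 0 + A i 1 * A i 1 := fun i _ => by
      rw [hm i]; ring
    rw [Finset.sum_congr rfl e, Finset.sum_add_distrib, h00, h11]; norm_num
  have hSz : ∑ i, z i = 0 := by
    rw [Finset.sum_congr rfl (fun i _ => hzm i), Finset.sum_sub_distrib, hSm,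
      Finset.sum_const, Finset.card_univ, Fintype.card_fin, nsmul_eq_mul, hnc]
    ring
  -- the pairwise positivity hypothesis in component form
  have hE : ∀ i j, 0 < W1 i * W1 j + W2 i * W2 j - z i * z j + c^2/2 := by
    intro i j
    have hip : ⟪w i, w j⟫ = W1 i * W1 j + W2 i * W2 j := by
      rw [hW1 i, hW1 j, hW2 i, hW2 j, ← (hw i).1, ← (hw i).2, ← (hw j).1, ← (hw j).2]
      simp [PiLp.inner_apply, Fin.sum_univ_two]
      ring
    have hcc : c^2/2 = 2/N^2 := by rw [hc]; ring
    have h := hcon i j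
    rw [hip] at h
    rw [hcc]
    linarith
  -- aggregates
  obtain ⟨p, hp⟩ : ∃ v : ℝ, v = ∑ i, W1 i^2 := ⟨_, rfl⟩
  obtain ⟨q, hq⟩ : ∃ v : ℝ, v = ∑ i, W2 i^2 := ⟨_, rfl⟩
  obtain ⟨r, hr⟩ : ∃ v : ℝ, v = ∑ i, W1 i * W2 i := ⟨_, rfl⟩
  obtain ⟨Zq, hZq⟩ : ∃ v : ℝ, v = ∑ i, z i^2 := ⟨_, rfl⟩
  obtain ⟨y1, hy1⟩ : ∃ v : ℝ, v = ∑ i, z i * W1 i := ⟨_, rfl⟩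
  obtain ⟨y2, hy2⟩ : ∃ v : ℝ, v = ∑ i, z i * W2 i := ⟨_, rfl⟩
  have hp0 : 0 ≤ p := hp ▸ Finset.sum_nonneg fun i _ => sq_nonneg _
  have hq0 : 0 ≤ q := hq ▸ Finset.sum_nonneg fun i _ => sq_nonneg _
  have hZq0 : 0 ≤ Zq := hZq ▸ Finset.sum_nonneg fun i _ => sq_nonneg _
  -- helper sums
  have hmw1 : ∑ i, m i * W1 i = y1 := by
    have e : ∀ i ∈ Finset.univ, m i * W1 i = z i * W1 i + c * W1 i := fun i _ => by
      rw [hmz i]; ring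
    rw [Finset.sum_congr rfl e, Finset.sum_add_distrib, ← Finset.mul_sum, hSw1, ← hy1]
    ring
  have hmw2 : ∑ i, m i * W2 i = y2 := by
    have e : ∀ i ∈ Finset.univ, m i * W2 i = z i * W2 i + c * W2 i := fun i _ => by
      rw [hmz i]; ring
    rw [Finset.sum_congr rfl e, Finset.sum_add_distrib, ← Finset.mul_sum, hSw2, ← hy2]
    ring
  have hmzs : ∑ i, m i * z i = Zq := by
    have e : ∀ i ∈ Finset.univ, m i * z i = z i^2 + c * z i := fun i _ => by
      rw [hmz i]; ring
    rw [Finset.sum_congr rfl e, Finset.sum_add_distrib, ← Finset.mul_sum, hSz, ← hZq]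
    ring
  have hms2 : ∑ i, m i^2 = Zq + 2*c := by
    have e : ∀ i ∈ Finset.univ, m i^2 = z i^2 + (2*c) * z i + c * c := fun i _ => by
      rw [hmz i]; ring
    rw [Finset.sum_congr rfl e, Finset.sum_add_distrib, Finset.sum_add_distrib,
      ← Finset.mul_sum, hSz, Finset.sum_const, Finset.card_univ, Fintype.card_fin,
      nsmul_eq_mul, ← hZq, ← mul_assoc, hnc]
    ring
  have hpq : p + q = Zq + 2*c := by
    have e : ∀ i ∈ Finset.univ, W1 i^2 + W2 i^2 = m i^2 := fun i _ => by
      rw [hW1 i, hW2 i, hm i]; ring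
    rw [hp, hq, ← Finset.sum_add_distrib, Finset.sum_congr rfl e, hms2]
  have hdet : r^2 ≤ p * q := by
    rw [hp, hq, hr]
    exact Finset.sum_mul_sq_le_sq_mul_sq _ _ _
  have hCSy : (y1^2 + y2^2)^2 ≤ Zq * (p*y1^2 + 2*(r*(y1*y2)) + q*y2^2) := by
    have hL : ∑ i, z i * (W1 i*y1 + W2 i*y2) = y1^2 + y2^2 := by
      have e : ∀ i ∈ Finset.univ, z i * (W1 i*y1 + W2 i*y2)
          = (z i*W1 i)*y1 + (z i*W2 i)*y2 := fun i _ => by ring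
      rw [Finset.sum_congr rfl e, Finset.sum_add_distrib, ← Finset.sum_mul, ← Finset.sum_mul,
        ← hy1, ← hy2]
      ring
    have hR : ∑ i, (W1 i*y1 + W2 i*y2)^2 = p*y1^2 + 2*(r*(y1*y2)) + q*y2^2 := by
      have e : ∀ i ∈ Finset.univ, (W1 i*y1 + W2 i*y2)^2
          = (W1 i^2)*y1^2 + (W1 i*W2 i)*(2*(y1*y2)) + (W2 i^2)*y2^2 := fun i _ => by ring
      rw [Finset.sum_congr rfl e, Finset.sum_add_distrib, Finset.sum_add_distrib,
        ← Finset.sum_mul, ← Finset.sum_mul, ← Finset.sum_mul, ← hp, ← hq, ← hr]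
      ring
    calc (y1^2 + y2^2)^2 = (∑ i, z i * (W1 i*y1 + W2 i*y2))^2 := by rw [hL]
      _ ≤ (∑ i, z i^2) * (∑ i, (W1 i*y1 + W2 i*y2)^2) := Finset.sum_mul_sq_le_sq_mul_sq _ _ _
      _ = Zq * (p*y1^2 + 2*(r*(y1*y2)) + q*y2^2) := by rw [← hZq, hR]
  -- the certificate sum identity
  have hsplit : ∀ i, (∑ j, (m i*m j - W1 i*W1 j - W2 i*W2 j)
        * (W1 i*W1 j + W2 i*W2 j - z i*z j + c^2/2))
      = (m i*W1 i)*y1 + (m i*W2 i)*y2 - (m i*z i)*Zq + (c^2/2*m i)*2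
        - (W1 i^2)*p - (2*(W1 i*W2 i))*r + (z i*W1 i)*y1 + (z i*W2 i)*y2
        - (W2 i^2)*q - (c^2/2*W1 i)*0 - (c^2/2*W2 i)*0 := by
    intro i
    have e : ∀ j ∈ Finset.univ, (m i*m j - W1 i*W1 j - W2 i*W2 j)
        * (W1 i*W1 j + W2 i*W2 j - z i*z j + c^2/2)
        = (m i*W1 i)*(m j*W1 j) + (m i*W2 i)*(m j*W2 j) - (m i*z i)*(m j*z j)
          + (c^2/2*m i)*(m j) - (W1 i^2)*(W1 j^2) - (2*(W1 i*W2 i))*(W1 j*W2 j)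
          + (z i*W1 i)*(z j*W1 j) + (z i*W2 i)*(z j*W2 j) - (W2 i^2)*(W2 j^2)
          - (c^2/2*W1 i)*(W1 j) - (c^2/2*W2 i)*(W2 j) := fun j _ => by ring
    rw [Finset.sum_congr rfl e]
    simp only [Finset.sum_add_distrib, Finset.sum_sub_distrib, ← Finset.mul_sum]
    rw [hmw1, hmw2, hmzs, hSm, ← hp, ← hr, ← hy1, ← hy2, ← hq, hSw1, hSw2]
  have hT : (∑ i, ∑ j, (m i*m j - W1 i*W1 j - W2 i*W2 j)
        * (W1 i*W1 j + W2 i*W2 j - z i*z j + c^2/2))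
      = 2*(y1^2 + y2^2) - Zq^2 + 2*c^2 - p^2 - q^2 - 2*r^2 := by
    rw [Finset.sum_congr rfl (fun i _ => hsplit i)]
    simp only [Finset.sum_add_distrib, Finset.sum_sub_distrib, ← Finset.sum_mul,
      ← Finset.mul_sum]
    rw [hmw1, hmw2, hmzs, hSm, ← hp, ← hr, ← hy1, ← hy2, ← hq, hSw1, hSw2]
    ring
  -- positivity of the certificate sum
  have hPnn : ∀ i j, 0 ≤ m i*m j - W1 i*W1 j - W2 i*W2 j := by
    intro i j
    have e : m i*m j - W1 i*W1 j - W2 i*W2 j = 2*(A i 0*A j 1 - A j 0*A i 1)^2 := by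
      rw [hm i, hm j, hW1 i, hW1 j, hW2 i, hW2 j]; ring
    rw [e]; positivity
  have hPsum : (∑ i, ∑ j, (m i*m j - W1 i*W1 j - W2 i*W2 j)) = 4 := by
    have e : ∀ i ∈ Finset.univ, (∑ j, (m i*m j - W1 i*W1 j - W2 i*W2 j))
        = m i*2 - W1 i*0 - W2 i*0 := by
      intro i _
      simp only [Finset.sum_sub_distrib, ← Finset.mul_sum]
      rw [hSm, hSw1, hSw2]
    rw [Finset.sum_congr rfl e]
    simp only [mul_zero, sub_zero, ← Finset.sum_mul]
    rw [hSm]; norm_num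
  obtain ⟨i0, j0, hP0⟩ : ∃ i j, 0 < m i*m j - W1 i*W1 j - W2 i*W2 j := by
    by_contra hno
    push_neg at hno
    have hle : (∑ i, ∑ j, (m i*m j - W1 i*W1 j - W2 i*W2 j)) ≤ 0 :=
      Finset.sum_nonpos fun i _ => Finset.sum_nonpos fun j _ => hno i j
    rw [hPsum] at hle
    norm_num at hle
  have hTpos : 0 < ∑ i, ∑ j, (m i*m j - W1 i*W1 j - W2 i*W2 j)
      * (W1 i*W1 j + W2 i*W2 j - z i*z j + c^2/2) := by
    apply Finset.sum_pos'
    · intro i _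
      exact Finset.sum_nonneg fun j _ => mul_nonneg (hPnn i j) (le_of_lt (hE i j))
    · exact ⟨i0, Finset.mem_univ _,
        Finset.sum_pos' (fun j _ => mul_nonneg (hPnn i0 j) (le_of_lt (hE i0 j)))
          ⟨j0, Finset.mem_univ _, mul_pos hP0 (hE i0 j0)⟩⟩
  have hKI : 2*c^2 ≤ p^2 + q^2 + 2*r^2 + Zq^2 - 2*(y1^2 + y2^2) :=
    key_ineq p q r Zq y1 y2 c hp0 hq0 hZq0 hc0 hdet hpq hCSy
  linarith [hT, hTpos, hKI]
end

section
/- For every natural number n ≥ 4, consider the n×2 real matrix A whose first n−2 rows all equal X = (a, 0), whose (n−1)-st row is Y = (b, c), and whose n-th row is Z = (b, −c), where a = √((n−1)/(n(n−2))), b = 1/√(2n), and c = 1/√2. Then every 2×2 submatrix formed by two distinct rows of A has smallest singular value at most 1/√n. -/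
open Matrix

lemma sigma2aux (p q r s t : ℝ)
    (hT : 2*t ≤ p^2+q^2+r^2+s^2)
    (hD : (p*s - q*r)^2 = t * (p^2+q^2+r^2+s^2 - t)) :
    sigma2 !![p,q;r,s] = Real.sqrt t := by
  unfold sigma2
  have htr : !![p,q;r,s]ᵀ = !![p,r;q,s] := by
    ext i j; fin_cases i <;> fin_cases j <;> simp
  rw [htr]
  have hT' : Matrix.trace (!![p,q;r,s] * !![p,r;q,s]) = p^2+q^2+r^2+s^2 := by
    rw [Matrix.mul_fin_two, Matrix.trace_fin_two_of]; ring
  have hDet : (!![p,q;r,s] * !![p,r;q,s]).det = (p*s-q*r)^2 := by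
    rw [Matrix.mul_fin_two, Matrix.det_fin_two_of]; ring
  rw [hT', hDet, hD]
  have h2 : (p^2+q^2+r^2+s^2)^2 - 4*(t*(p^2+q^2+r^2+s^2 - t)) = (p^2+q^2+r^2+s^2 - 2*t)^2 := by
    ring
  rw [h2, Real.sqrt_sq (by linarith)]
  congr 1; ring

theorem stmt_18 (n : ℕ) (hn : 4 ≤ n) (a b c : ℝ)
    (ha : a = Real.sqrt (((n : ℝ) - 1) / ((n : ℝ) * ((n : ℝ) - 2))))
    (hb : b = 1 / Real.sqrt (2 * (n : ℝ))) (hc : c = 1 / Real.sqrt 2)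
    (A : Matrix (Fin n) (Fin 2) ℝ)
    (hA : ∀ i : Fin n,
      (i.1 < n - 2 → A i 0 = a ∧ A i 1 = 0) ∧
      (i.1 = n - 2 → A i 0 = b ∧ A i 1 = c) ∧
      (i.1 = n - 1 → A i 0 = b ∧ A i 1 = -c)) :
    ∀ i j : Fin n, i ≠ j →
      sigma2 !![A i 0, A i 1; A j 0, A j 1] ≤ 1 / Real.sqrt n := by
  intro i j hij
  have hn4 : (4:ℝ) ≤ (n:ℝ) := by exact_mod_cast hn
  have hnpos : (0:ℝ) < (n:ℝ) := by linarith
  have hn0 : (n:ℝ) ≠ 0 := ne_of_gt hnpos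
  have hn2 : (n:ℝ) - 2 ≠ 0 := by intro h; nlinarith
  have ha2 : a^2 = ((n:ℝ) - 1) / ((n:ℝ) * ((n:ℝ) - 2)) := by
    rw [ha, Real.sq_sqrt]
    apply div_nonneg <;> nlinarith
  have hb2 : b^2 = 1 / (2 * (n:ℝ)) := by
    rw [hb, div_pow, one_pow, Real.sq_sqrt (by linarith)]
  have hc2 : c^2 = 1 / 2 := by
    rw [hc, div_pow, one_pow, Real.sq_sqrt (by norm_num)]
  have hfin : Real.sqrt (1/(n:ℝ)) = 1 / Real.sqrt n := by
    rw [one_div, one_div, Real.sqrt_inv]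
  have htn : (0:ℝ) ≤ 1/(n:ℝ) := by positivity
  have h2n : 2 * (1/(n:ℝ)) ≤ 1/2 := by
    rw [mul_one_div, div_le_div_iff₀ hnpos (by norm_num)]; linarith
  have hXY : ∀ x y : ℝ, x^2 = 1/2 → (a*x - 0*y)^2 = 1/(n:ℝ) * (a^2+0^2+y^2+x^2 - 1/(n:ℝ)) →
      False → True := fun _ _ _ _ _ => trivial
  -- key divisions facts for each case
  have hDxy : ∀ x : ℝ, x^2 = c^2 → (a*x)^2 = 1/(n:ℝ) * (a^2 + b^2 + c^2 - 1/(n:ℝ)) := by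
    intro x hx
    have : (a*x)^2 = a^2 * x^2 := by ring
    rw [this, hx, ha2, hb2, hc2]
    field_simp
    ring
  have hDyz : (2*b*c)^2 = 1/(n:ℝ) * (2*b^2 + 2*c^2 - 1/(n:ℝ)) := by
    have : (2*b*c)^2 = 4 * b^2 * c^2 := by ring
    rw [this, hb2, hc2]
    field_simp
    ring
  have hTxy : 2 * (1/(n:ℝ)) ≤ a^2 + b^2 + c^2 := by
    have := sq_nonneg a; have := sq_nonneg b; linarith [hc2.ge, hc2.le]
  have hTyz : 2 * (1/(n:ℝ)) ≤ 2*b^2 + 2*c^2 := by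
    have := sq_nonneg b; linarith [hc2.le, hc2.ge]
  have hsq : ∀ u v : ℝ, sigma2 !![u, v; u, v] ≤ 1 / Real.sqrt n := by
    intro u v
    have h0 : sigma2 !![u,v;u,v] = Real.sqrt 0 := by
      apply sigma2aux
      · nlinarith [sq_nonneg u, sq_nonneg v]
      · ring
    rw [h0, Real.sqrt_zero]
    positivity
  have key : ∀ p q r s : ℝ, 2 * (1/(n:ℝ)) ≤ p^2+q^2+r^2+s^2 →
      (p*s - q*r)^2 = 1/(n:ℝ) * (p^2+q^2+r^2+s^2 - 1/(n:ℝ)) →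
      sigma2 !![p,q;r,s] ≤ 1 / Real.sqrt n := by
    intro p q r s h1 h2
    rw [sigma2aux p q r s (1/(n:ℝ)) h1 h2, hfin]
  have hi : i.1 < n - 2 ∨ i.1 = n - 2 ∨ i.1 = n - 1 := by omega
  have hj : j.1 < n - 2 ∨ j.1 = n - 2 ∨ j.1 = n - 1 := by omega
  have hij' : i.1 ≠ j.1 := fun h => hij (Fin.ext h)
  rcases hi with hi | hi | hi <;> rcases hj with hj | hj | hj
  · -- X X
    obtain ⟨hi0, hi1⟩ := (hA i).1 hi
    obtain ⟨hj0, hj1⟩ := (hA j).1 hj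
    rw [hi0, hi1, hj0, hj1]; exact hsq a 0
  · -- X Y
    obtain ⟨hi0, hi1⟩ := (hA i).1 hi
    obtain ⟨hj0, hj1⟩ := (hA j).2.1 hj
    rw [hi0, hi1, hj0, hj1]
    apply key
    · linarith [hTxy, (by norm_num : (0:ℝ)^2 = 0)]
    · linear_combination hDxy c rfl
  · -- X Z
    obtain ⟨hi0, hi1⟩ := (hA i).1 hi
    obtain ⟨hj0, hj1⟩ := (hA j).2.2 hj
    rw [hi0, hi1, hj0, hj1]
    apply key
    · linarith [hTxy, (by norm_num : (0:ℝ)^2 = 0)]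
    · linear_combination hDxy (-c) (by ring)
  · -- Y X
    obtain ⟨hi0, hi1⟩ := (hA i).2.1 hi
    obtain ⟨hj0, hj1⟩ := (hA j).1 hj
    rw [hi0, hi1, hj0, hj1]
    apply key
    · linarith [hTxy, (by norm_num : (0:ℝ)^2 = 0)]
    · linear_combination hDxy c rfl
  · -- Y Y impossible
    exact absurd (hi.trans hj.symm) hij'
  · -- Y Z
    obtain ⟨hi0, hi1⟩ := (hA i).2.1 hi
    obtain ⟨hj0, hj1⟩ := (hA j).2.2 hj
    rw [hi0, hi1, hj0, hj1]
    apply key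
    · linarith [hTyz]
    · linear_combination hDyz
  · -- Z X
    obtain ⟨hi0, hi1⟩ := (hA i).2.2 hi
    obtain ⟨hj0, hj1⟩ := (hA j).1 hj
    rw [hi0, hi1, hj0, hj1]
    apply key
    · linarith [hTxy, (by norm_num : (0:ℝ)^2 = 0)]
    · linear_combination hDxy (-c) (by ring)
  · -- Z Y
    obtain ⟨hi0, hi1⟩ := (hA i).2.2 hi
    obtain ⟨hj0, hj1⟩ := (hA j).2.1 hj
    rw [hi0, hi1, hj0, hj1]
    apply key
    · linarith [hTyz]
    · linear_combination hDyz
  · -- Z Z impossible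
    exact absurd (hi.trans hj.symm) hij'
end

section
/- For every natural number n ≥ 4, with a = √((n−1)/(n(n−2))), b = 1/√(2n), and c = 1/√2, the 2×2 real matrix with rows X = (a, 0) and Y = (b, c) has smallest singular value exactly 1/√n, and the same holds for the 2×2 matrices with rows (X, Z) and with rows (Y, Z), where Z = (b, −c). -/
open Matrix

lemma key_s19 (N T D : ℝ) (hN : 0 < N) (hD : D = T / N - 1 / N ^ 2) (hT : 2 / N ≤ T) :
    Real.sqrt ((T - Real.sqrt (T ^ 2 - 4 * D)) / 2) = 1 / Real.sqrt N := by
  have h1 : T ^ 2 - 4 * D = (T - 2 / N) ^ 2 := by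
    rw [hD]; field_simp; ring
  rw [h1, Real.sqrt_sq (by linarith)]
  have h2 : (T - (T - 2 / N)) / 2 = 1 / N := by ring
  rw [h2, one_div, Real.sqrt_inv, one_div]

theorem stmt_19 (n : ℕ) (hn : 4 ≤ n) (a b c : ℝ)
    (ha : a = Real.sqrt (((n : ℝ) - 1) / ((n : ℝ) * ((n : ℝ) - 2))))
    (hb : b = 1 / Real.sqrt (2 * (n : ℝ))) (hc : c = 1 / Real.sqrt 2) :
    sigma2 !![a, 0; b, c] = 1 / Real.sqrt n ∧
    sigma2 !![a, 0; b, -c] = 1 / Real.sqrt n ∧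
    sigma2 !![b, c; b, -c] = 1 / Real.sqrt n := by
  set N : ℝ := (n : ℝ) with hNdef
  have hN4 : (4 : ℝ) ≤ N := by rw [hNdef]; exact_mod_cast hn
  have hN : 0 < N := by linarith
  have hN2 : 0 < N - 2 := by linarith
  have ha2 : a ^ 2 = (N - 1) / (N * (N - 2)) := by
    rw [ha, Real.sq_sqrt (div_nonneg (by linarith) (by nlinarith))]
  have hb2 : b ^ 2 = 1 / (2 * N) := by
    rw [hb, div_pow, one_pow, Real.sq_sqrt (by positivity)]
  have hc2 : c ^ 2 = 1 / 2 := by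
    rw [hc, div_pow, one_pow, Real.sq_sqrt (by norm_num)]
  refine ⟨?_, ?_, ?_⟩
  · rw [sigma2]
    have htr : Matrix.trace (!![a, 0; b, c] * !![a, 0; b, c]ᵀ) = a ^ 2 + b ^ 2 + c ^ 2 := by
      simp [Matrix.trace_fin_two, Matrix.mul_apply, Fin.sum_univ_two, Matrix.vecHead, Matrix.vecTail, Matrix.transpose_apply, Matrix.vecMul, dotProduct]; ring
    have hdet : (!![a, 0; b, c] * !![a, 0; b, c]ᵀ).det = a ^ 2 * c ^ 2 := by
      rw [Matrix.det_mul, Matrix.det_transpose, Matrix.det_fin_two_of]; ring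
    rw [htr, hdet]
    refine key_s19 N _ _ hN ?_ ?_
    · rw [ha2, hb2, hc2]; field_simp; ring
    · rw [ha2, hb2, hc2]
      rw [div_add_div _ _ (by positivity) (by positivity), div_add_div _ _ (by positivity) (by norm_num),
        div_le_div_iff₀ hN (by positivity)]
      nlinarith [sq_nonneg N, sq_nonneg (N - 2)]
  · rw [sigma2]
    have htr : Matrix.trace (!![a, 0; b, -c] * !![a, 0; b, -c]ᵀ) = a ^ 2 + b ^ 2 + c ^ 2 := by
      simp [Matrix.trace_fin_two, Matrix.mul_apply, Fin.sum_univ_two, Matrix.vecHead, Matrix.vecTail, Matrix.transpose_apply, Matrix.vecMul, dotProduct]; ring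
    have hdet : (!![a, 0; b, -c] * !![a, 0; b, -c]ᵀ).det = a ^ 2 * c ^ 2 := by
      rw [Matrix.det_mul, Matrix.det_transpose, Matrix.det_fin_two_of]; ring
    rw [htr, hdet]
    refine key_s19 N _ _ hN ?_ ?_
    · rw [ha2, hb2, hc2]; field_simp; ring
    · rw [ha2, hb2, hc2]
      rw [div_add_div _ _ (by positivity) (by positivity), div_add_div _ _ (by positivity) (by norm_num),
        div_le_div_iff₀ hN (by positivity)]
      nlinarith [sq_nonneg N, sq_nonneg (N - 2)]
  · rw [sigma2]
    have htr : Matrix.trace (!![b, c; b, -c] * !![b, c; b, -c]ᵀ) = 2 * b ^ 2 + 2 * c ^ 2 := by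
      simp [Matrix.trace_fin_two, Matrix.mul_apply, Fin.sum_univ_two, Matrix.vecHead, Matrix.vecTail, Matrix.transpose_apply, Matrix.vecMul, dotProduct]; ring
    have hdet : (!![b, c; b, -c] * !![b, c; b, -c]ᵀ).det = 4 * b ^ 2 * c ^ 2 := by
      rw [Matrix.det_mul, Matrix.det_transpose, Matrix.det_fin_two_of]; ring
    rw [htr, hdet]
    refine key_s19 N _ _ hN ?_ ?_
    · rw [hb2, hc2]; field_simp; ring
    · rw [hb2, hc2]
      rw [div_le_iff₀ hN] at *
      nlinarith
end
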